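/- Let {v_k}, {u_k}, {a_k}, {b_k} be sequences of nonnegative real random variables adapted to a filtration F_k with E[v_{k+1} | F_k] ≤ (1 + a_k) v_k − u_k + b_k almost surely for all k, and suppose Σ a_k < ∞ and Σ b_k < ∞ almost surely. Then Σ u_k < ∞ almost surely and v_k converges almost surely to a nonnegative random variable. -/

import Mathlib

open MeasureTheory Filter Finset

namespace RS

/-- If `χ k` is the indicator that the partial sum of `h` up to `k` is at most `M`,
then `χ` is `1` on an initial segment. -/
lemma chi_one_of_le {h : ℕ → ℝ} {M : ℝ} (hh : ∀ k, 0 ≤ h k)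
    {χ : ℕ → ℝ} (hχ : ∀ k, χ k = if (∑ j ∈ Finset.range (k+1), h j) ≤ M then 1 else 0)
    {k j : ℕ} (hjk : j ≤ k) (h1 : χ k = 1) : χ j = 1 := by
  rw [hχ] at h1 ⊢
  have hk : (∑ i ∈ Finset.range (k+1), h i) ≤ M := by
    by_contra hc
    rw [if_neg hc] at h1; norm_num at h1
  have hmono : (∑ i ∈ Finset.range (j+1), h i) ≤ ∑ i ∈ Finset.range (k+1), h i :=
    Finset.sum_le_sum_of_subset_of_nonneg
      (Finset.range_subset_range.2 (by omega)) (fun i _ _ => hh i)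
  rw [if_pos (le_trans hmono hk)]

lemma chi_zero_or_one {h : ℕ → ℝ} {M : ℝ}
    {χ : ℕ → ℝ} (hχ : ∀ k, χ k = if (∑ j ∈ Finset.range (k+1), h j) ≤ M then 1 else 0)
    (k : ℕ) : χ k = 0 ∨ χ k = 1 := by
  rw [hχ]; split_ifs <;> simp

/-- Pointwise lower bound for the stopped Robbins–Siegmund process. -/
lemma lower_bound (f g h : ℕ → ℝ) (M : ℝ) (hM : 0 ≤ M)
    (hf : ∀ k, 0 ≤ f k) (hg : ∀ k, 0 ≤ g k) (hh : ∀ k, 0 ≤ h k)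
    (χ : ℕ → ℝ) (hχ : ∀ k, χ k = if (∑ j ∈ Finset.range (k+1), h j) ≤ M then 1 else 0)
    (n : ℕ) :
    -M ≤ f 0 + ∑ j ∈ Finset.range n, (χ j * f (j+1) - χ j * (f j - g j + h j)) := by
  have hχ0 : ∀ k, 0 ≤ χ k := by
    intro k; rcases chi_zero_or_one hχ k with h' | h' <;> rw [h'] <;> norm_num
  -- T n := f 0 + ∑_{j<n} χ j * (f (j+1) - f j) is nonnegative
  have hT : ∀ n, 0 ≤ f 0 + ∑ j ∈ Finset.range n, χ j * (f (j+1) - f j) ∧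
      (χ n = 1 → f 0 + ∑ j ∈ Finset.range n, χ j * (f (j+1) - f j) = f n) := by
    intro n
    induction n with
    | zero => exact ⟨by simpa using hf 0, fun _ => by simp⟩
    | succ n ih =>
      rcases chi_zero_or_one hχ n with h0 | h1
      · constructor
        · rw [Finset.sum_range_succ, h0]; simpa using ih.1
        · intro hc
          exact absurd (chi_one_of_le hh hχ (Nat.le_succ n) hc) (by rw [h0]; norm_num)
      · have heq := ih.2 h1
        constructor
        · rw [Finset.sum_range_succ, h1, one_mul, ← add_assoc, heq]
          simpa using hf (n+1)
        · intro _
          rw [Finset.sum_range_succ, h1, one_mul, ← add_assoc, heq]; ring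
  -- ∑_{j<n} χ j * h j ≤ M
  have hS : ∀ n, ∑ j ∈ Finset.range n, χ j * h j ≤ M := by
    intro n
    induction n with
    | zero => simpa using hM
    | succ n ih =>
      rcases chi_zero_or_one hχ n with h0 | h1
      · rw [Finset.sum_range_succ, h0]; simpa using ih
      · have hall : ∀ j ∈ Finset.range (n+1), χ j * h j = h j := by
          intro j hj
          rw [chi_one_of_le hh hχ (Nat.lt_succ_iff.mp (Finset.mem_range.mp hj)) h1, one_mul]
        rw [Finset.sum_congr rfl hall]
        have h1' := h1; rw [hχ] at h1'
        by_contra hc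
        rw [if_neg hc] at h1'; norm_num at h1'
  have hsplit : ∑ j ∈ Finset.range n, (χ j * f (j+1) - χ j * (f j - g j + h j)) =
      (∑ j ∈ Finset.range n, χ j * (f (j+1) - f j)) +
      (∑ j ∈ Finset.range n, χ j * g j) - (∑ j ∈ Finset.range n, χ j * h j) := by
    induction n with
    | zero => simp
    | succ n ih =>
      rw [Finset.sum_range_succ, Finset.sum_range_succ, Finset.sum_range_succ,
        Finset.sum_range_succ, ih]
      ring
  have hg' : 0 ≤ ∑ j ∈ Finset.range n, χ j * g j :=
    Finset.sum_nonneg fun j _ => mul_nonneg (hχ0 j) (hg j)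
  have := (hT n).1
  rw [hsplit]
  linarith [hS n]


lemma aux {Ω : Type*} {m0 : MeasurableSpace Ω} {μ : Measure Ω}
    [IsProbabilityMeasure μ] (F : Filtration ℕ m0)
    (v' u' b' : ℕ → Ω → ℝ)
    (hmv : ∀ k, Measurable[F k] (v' k))
    (hmu : ∀ k, Measurable[F k] (u' k))
    (hmb : ∀ k, Measurable[F k] (b' k))
    (h0v : ∀ k ω, 0 ≤ v' k ω) (h0u : ∀ k ω, 0 ≤ u' k ω) (h0b : ∀ k ω, 0 ≤ b' k ω)
    (hint : ∀ k, Integrable (v' k) μ)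
    (hrec : ∀ k, μ[v' (k+1)|F k] ≤ᵐ[μ] fun ω => v' k ω - u' k ω + b' k ω)
    (M : ℕ) :
    ∀ᵐ ω ∂μ, (∀ n, ∑ j ∈ Finset.range n, b' j ω ≤ M) →
      ((Summable fun k => u' k ω) ∧ ∃ c, Tendsto (fun k => v' k ω) atTop (nhds c)) := by
  classical
  set χ : ℕ → Ω → ℝ :=
    fun k ω => if (∑ j ∈ Finset.range (k+1), b' j ω) ≤ (M : ℝ) then 1 else 0 with hχdef
  have hχeq : ∀ ω k, χ k ω = if (∑ j ∈ Finset.range (k+1), b' j ω) ≤ (M : ℝ) then 1 else 0 :=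
    fun ω k => rfl
  have hχ01 : ∀ k ω, χ k ω = 0 ∨ χ k ω = 1 := fun k ω => chi_zero_or_one (hχeq ω) k
  have hχ0 : ∀ k ω, 0 ≤ χ k ω := by
    intro k ω; rcases hχ01 k ω with h | h <;> rw [h] <;> norm_num
  have hχ1 : ∀ k ω, χ k ω ≤ 1 := by
    intro k ω; rcases hχ01 k ω with h | h <;> rw [h] <;> norm_num
  -- measurability of χ k wrt F k
  have hmχ : ∀ k, Measurable[F k] (χ k) := by
    intro k
    have hsum : Measurable[F k] fun ω => ∑ j ∈ Finset.range (k+1), b' j ω :=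
      Finset.measurable_sum _ fun j hj =>
        (hmb j).mono (F.mono (Nat.lt_succ_iff.mp (Finset.mem_range.mp hj))) le_rfl
    exact Measurable.ite (measurableSet_le hsum measurable_const)
      measurable_const measurable_const
  -- χ k * b' k ≤ M
  have hχb : ∀ k ω, χ k ω * b' k ω ≤ (M : ℝ) := by
    intro k ω
    rcases hχ01 k ω with h | h
    · rw [h, zero_mul]; positivity
    · rw [h, one_mul]
      have hle : (∑ j ∈ Finset.range (k+1), b' j ω) ≤ (M : ℝ) := by
        by_contra hc
        rw [hχeq ω k, if_neg hc] at h; norm_num at h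
      exact le_trans (Finset.single_le_sum (fun j _ => h0b j ω) (Finset.self_mem_range_succ k)) hle
  -- u' k ≤ v' k + b' k a.e.
  have hu'le : ∀ k, ∀ᵐ ω ∂μ, u' k ω ≤ v' k ω + b' k ω := by
    intro k
    filter_upwards [hrec k, condExp_nonneg (m := F k) (μ := μ)
      (ae_of_all _ (h0v (k+1)))] with ω h1 h2
    simp only [Pi.zero_apply] at h2
    linarith
  -- the pieces
  set p : ℕ → Ω → ℝ := fun k ω => χ k ω * v' (k+1) ω with hpdef
  set r : ℕ → Ω → ℝ := fun k ω => χ k ω * (v' k ω - u' k ω + b' k ω) with hrdef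
  set G : ℕ → Ω → ℝ :=
    fun k ω => v' 0 ω + ∑ j ∈ Finset.range k, (p j ω - r j ω) with hGdef
  -- integrability
  have hip : ∀ k, Integrable (p k) μ := by
    intro k
    refine Integrable.mono' (hint (k+1))
      (((hmχ k).mono (F.le k) le_rfl).mul
        ((hmv (k+1)).mono (F.le (k+1)) le_rfl)).aestronglyMeasurable
      (ae_of_all _ fun ω => ?_)
    rw [Real.norm_eq_abs, abs_of_nonneg (mul_nonneg (hχ0 k ω) (h0v (k+1) ω))]
    exact mul_le_of_le_one_left (h0v (k+1) ω) (hχ1 k ω)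
  have hiχv : ∀ k, Integrable (fun ω => χ k ω * v' k ω) μ := by
    intro k
    refine Integrable.mono' (hint k)
      (((hmχ k).mono (F.le k) le_rfl).mul
        ((hmv k).mono (F.le k) le_rfl)).aestronglyMeasurable
      (ae_of_all _ fun ω => ?_)
    rw [Real.norm_eq_abs, abs_of_nonneg (mul_nonneg (hχ0 k ω) (h0v k ω))]
    exact mul_le_of_le_one_left (h0v k ω) (hχ1 k ω)
  have hiχb : ∀ k, Integrable (fun ω => χ k ω * b' k ω) μ := by
    intro k
    refine Integrable.mono' (integrable_const (M : ℝ))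
      (((hmχ k).mono (F.le k) le_rfl).mul
        ((hmb k).mono (F.le k) le_rfl)).aestronglyMeasurable
      (ae_of_all _ fun ω => ?_)
    rw [Real.norm_eq_abs, abs_of_nonneg (mul_nonneg (hχ0 k ω) (h0b k ω))]
    exact hχb k ω
  have hiχu : ∀ k, Integrable (fun ω => χ k ω * u' k ω) μ := by
    intro k
    refine Integrable.mono' ((hint k).add (integrable_const (M : ℝ)))
      (((hmχ k).mono (F.le k) le_rfl).mul
        ((hmu k).mono (F.le k) le_rfl)).aestronglyMeasurable ?_
    filter_upwards [hu'le k] with ω h1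
    rw [Real.norm_eq_abs, abs_of_nonneg (mul_nonneg (hχ0 k ω) (h0u k ω))]
    have h2 : χ k ω * u' k ω ≤ χ k ω * v' k ω + χ k ω * b' k ω := by
      calc χ k ω * u' k ω ≤ χ k ω * (v' k ω + b' k ω) :=
            mul_le_mul_of_nonneg_left h1 (hχ0 k ω)
        _ = χ k ω * v' k ω + χ k ω * b' k ω := by ring
    have h3 : χ k ω * v' k ω ≤ v' k ω := mul_le_of_le_one_left (h0v k ω) (hχ1 k ω)
    simp only [Pi.add_apply]
    linarith [hχb k ω]
  have hir : ∀ k, Integrable (r k) μ := by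
    intro k
    have : r k = fun ω => χ k ω * v' k ω - χ k ω * u' k ω + χ k ω * b' k ω := by
      funext ω; rw [hrdef]; ring
    rw [this]
    exact ((hiχv k).sub (hiχu k)).add (hiχb k)
  have hiG : ∀ k, Integrable (G k) μ := by
    intro k
    exact (hint 0).add (integrable_finset_sum _ fun j _ => (hip j).sub (hir j))
  -- measurability of G k wrt F k
  have hmG : ∀ k, Measurable[F k] (G k) := by
    intro k
    refine ((hmv 0).mono (F.mono (Nat.zero_le k)) le_rfl).add ?_
    refine Finset.measurable_sum _ fun j hj => ?_
    have hjk : j + 1 ≤ k := Finset.mem_range.mp hj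
    have hjk' : j ≤ k := le_trans (Nat.le_succ j) hjk
    exact (((hmχ j).mono (F.mono hjk') le_rfl).mul
        ((hmv (j+1)).mono (F.mono hjk) le_rfl)).sub
      (((hmχ j).mono (F.mono hjk') le_rfl).mul
        ((((hmv j).sub (hmu j)).add (hmb j)).mono (F.mono hjk') le_rfl))
  have hGadp : StronglyAdapted F G := fun k => (hmG k).stronglyMeasurable
  -- G (k+1) = G k + (p k - r k)
  have hGsucc : ∀ k, G (k+1) = G k + (p k - r k) := by
    intro k; funext ω
    simp only [hGdef, Pi.add_apply, Pi.sub_apply, Finset.sum_range_succ]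
    ring
  -- supermartingale property
  have hsuper : Supermartingale G F μ := by
    refine supermartingale_nat hGadp hiG fun k => ?_
    have hcm : μ[G k|F k] = G k :=
      condExp_of_stronglyMeasurable (F.le k) (hGadp k) (hiG k)
    have hrm : μ[r k|F k] = r k :=
      condExp_of_stronglyMeasurable (F.le k)
        ((((hmχ k).mul (((hmv k).sub (hmu k)).add (hmb k)))).stronglyMeasurable) (hir k)
    have hpull : μ[p k|F k] =ᵐ[μ] fun ω => χ k ω * (μ[v' (k+1)|F k]) ω := by
      have := condExp_mul_of_stronglyMeasurable_left (m := F k) (μ := μ)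
        ((hmχ k).stronglyMeasurable) (g := v' (k+1)) ?_ (hint (k+1))
      · exact this
      · exact hip k
    rw [hGsucc k]
    calc μ[G k + (p k - r k)|F k]
        =ᵐ[μ] μ[G k|F k] + μ[p k - r k|F k] := condExp_add (hiG k) ((hip k).sub (hir k)) _
      _ =ᵐ[μ] μ[G k|F k] + (μ[p k|F k] - μ[r k|F k]) := by
          filter_upwards [condExp_sub (hip k) (hir k) _] with ω h
          simp only [Pi.add_apply, Pi.sub_apply] at h ⊢
          rw [h]
      _ ≤ᵐ[μ] G k := by
          filter_upwards [hpull, hrec k] with ω h1 h2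
          simp only [Pi.add_apply, Pi.sub_apply]
          rw [hcm, hrm, h1]
          have h3 : χ k ω * (μ[v' (k+1)|F k]) ω ≤ χ k ω * (v' k ω - u' k ω + b' k ω) :=
            mul_le_mul_of_nonneg_left h2 (hχ0 k ω)
          rw [hrdef]
          simp only
          linarith
  -- pointwise lower bound
  have hGlb : ∀ k ω, -(M : ℝ) ≤ G k ω := by
    intro k ω
    have := lower_bound (fun j => v' j ω) (fun j => u' j ω) (fun j => b' j ω) (M : ℝ)
      (Nat.cast_nonneg M) (fun j => h0v j ω) (fun j => h0u j ω) (fun j => h0b j ω)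
      (fun j => χ j ω) (fun j => hχeq ω j) k
    exact this
  -- L1 bound
  set C : ℝ := (∫ ω, v' 0 ω ∂μ) + 2 * M with hCdef
  have hintle : ∀ k, ∫ ω, G k ω ∂μ ≤ ∫ ω, v' 0 ω ∂μ := by
    intro k
    have h1 : μ[G k|F 0] ≤ᵐ[μ] G 0 := hsuper.2.1 0 k (Nat.zero_le k)
    have h2 : ∫ ω, G k ω ∂μ = ∫ ω, (μ[G k|F 0]) ω ∂μ := (integral_condExp (F.le 0)).symm
    have h3 : ∫ ω, (μ[G k|F 0]) ω ∂μ ≤ ∫ ω, G 0 ω ∂μ :=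
      integral_mono_ae integrable_condExp (hiG 0) h1
    have h4 : ∫ ω, G 0 ω ∂μ = ∫ ω, v' 0 ω ∂μ := by
      apply integral_congr_ae; filter_upwards with ω; simp [hGdef]
    linarith
  have habs : ∀ k, ∫ ω, |G k ω| ∂μ ≤ C := by
    intro k
    have h1 : ∀ ω, |G k ω| ≤ G k ω + 2 * M := by
      intro ω
      rcases le_or_gt 0 (G k ω) with h | h
      · rw [abs_of_nonneg h]
        have : (0:ℝ) ≤ (M:ℝ) := Nat.cast_nonneg M
        linarith
      · rw [abs_of_neg h]; linarith [hGlb k ω]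
    have h2 : ∫ ω, |G k ω| ∂μ ≤ ∫ ω, (G k ω + 2 * M) ∂μ :=
      integral_mono (hiG k).abs ((hiG k).add (integrable_const _)) h1
    have h3 : ∫ ω, (G k ω + 2 * M) ∂μ = (∫ ω, G k ω ∂μ) + 2 * M := by
      rw [integral_add (hiG k) (integrable_const _), integral_const]
      simp
    rw [hCdef]
    linarith [hintle k]
  have hbdd : ∀ n, eLpNorm (-G n) 1 μ ≤ (C.toNNReal : ENNReal) := by
    intro n
    rw [eLpNorm_neg, eLpNorm_one_eq_lintegral_enorm,
      ← ofReal_integral_norm_eq_lintegral_enorm (hiG n)]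
    have : (∫ ω, ‖G n ω‖ ∂μ) ≤ C := by
      simpa [Real.norm_eq_abs] using habs n
    calc ENNReal.ofReal (∫ ω, ‖G n ω‖ ∂μ) ≤ ENNReal.ofReal C := ENNReal.ofReal_le_ofReal this
      _ = (C.toNNReal : ENNReal) := rfl
  have hGconv : ∀ᵐ ω ∂μ, ∃ c, Tendsto (fun n => G n ω) atTop (nhds c) := by
    have := hsuper.neg.exists_ae_tendsto_of_bdd hbdd
    filter_upwards [this] with ω ⟨c, hc⟩
    exact ⟨-c, by simpa using hc.neg⟩
  -- conclusion
  filter_upwards [hGconv] with ω hc hall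
  obtain ⟨c, hc⟩ := hc
  have hχone : ∀ k, χ k ω = 1 := by
    intro k; rw [hχeq ω k, if_pos (hall (k+1))]
  have hGeq : ∀ n, G n ω = v' n ω + (∑ j ∈ Finset.range n, u' j ω)
      - ∑ j ∈ Finset.range n, b' j ω := by
    intro n
    rw [hGdef]
    simp only
    have : ∀ j ∈ Finset.range n, p j ω - r j ω =
        (v' (j+1) ω - v' j ω) + u' j ω - b' j ω := by
      intro j _
      rw [hpdef, hrdef]; simp only [hχone j]; ring
    rw [Finset.sum_congr rfl this, Finset.sum_sub_distrib, Finset.sum_add_distrib,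
      Finset.sum_range_sub (fun j => v' j ω)]
    ring
  have hbsum : Summable fun j => b' j ω :=
    summable_of_sum_range_le (fun j => h0b j ω) hall
  have hbt : Tendsto (fun n => ∑ j ∈ Finset.range n, b' j ω) atTop (nhds (∑' j, b' j ω)) :=
    hbsum.hasSum.tendsto_sum_nat
  have hvu : Tendsto (fun n => v' n ω + ∑ j ∈ Finset.range n, u' j ω) atTop
      (nhds (c + ∑' j, b' j ω)) := by
    have : (fun n => v' n ω + ∑ j ∈ Finset.range n, u' j ω) =
        fun n => G n ω + ∑ j ∈ Finset.range n, b' j ω := by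
      funext n; rw [hGeq n]; ring
    rw [this]
    exact hc.add hbt
  obtain ⟨K, hK⟩ := hvu.bddAbove_range
  have husum : Summable fun j => u' j ω := by
    refine summable_of_sum_range_le (c := K) (fun j => h0u j ω) fun n => ?_
    calc ∑ j ∈ Finset.range n, u' j ω ≤ v' n ω + ∑ j ∈ Finset.range n, u' j ω := by
          linarith [h0v n ω]
      _ ≤ K := hK ⟨n, rfl⟩
  refine ⟨husum, ⟨c + (∑' j, b' j ω) - ∑' j, u' j ω, ?_⟩⟩
  have hut : Tendsto (fun n => ∑ j ∈ Finset.range n, u' j ω) atTop (nhds (∑' j, u' j ω)) :=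
    husum.hasSum.tendsto_sum_nat
  have : (fun n => v' n ω) =
      fun n => (v' n ω + ∑ j ∈ Finset.range n, u' j ω) - ∑ j ∈ Finset.range n, u' j ω := by
    funext n; ring
  rw [this]
  exact hvu.sub hut

end RS

open MeasureTheory Filter

/-- Robbins–Siegmund almost-supermartingale convergence theorem. -/
theorem robbins_siegmund {Ω : Type*} {m0 : MeasurableSpace Ω} {μ : Measure Ω}
    [IsProbabilityMeasure μ] (F : Filtration ℕ m0)
    (v u a b : ℕ → Ω → ℝ)
    (hv : Adapted F v) (hu : Adapted F u) (ha : Adapted F a) (hb : Adapted F b)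
    (hvint : ∀ k, Integrable (v k) μ)
    (hv0 : ∀ k, 0 ≤ᵐ[μ] v k) (hu0 : ∀ k, 0 ≤ᵐ[μ] u k)
    (ha0 : ∀ k, 0 ≤ᵐ[μ] a k) (hb0 : ∀ k, 0 ≤ᵐ[μ] b k)
    (hasum : ∀ᵐ ω ∂μ, Summable fun k => a k ω)
    (hbsum : ∀ᵐ ω ∂μ, Summable fun k => b k ω)
    (hrec : ∀ k, μ[v (k + 1) | F k] ≤ᵐ[μ]
      fun ω => (1 + a k ω) * v k ω - u k ω + b k ω) :
    ∀ᵐ ω ∂μ, (Summable fun k => u k ω) ∧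
      ∃ c : ℝ, 0 ≤ c ∧ Tendsto (fun k => v k ω) atTop (nhds c) := by
  classical
  set V : ℕ → Ω → ℝ := fun k ω => v k ω ⊔ 0 with hVdef
  set U : ℕ → Ω → ℝ := fun k ω => u k ω ⊔ 0 with hUdef
  set A : ℕ → Ω → ℝ := fun k ω => a k ω ⊔ 0 with hAdef
  set B : ℕ → Ω → ℝ := fun k ω => b k ω ⊔ 0 with hBdef
  have hVe : ∀ k, V k =ᵐ[μ] v k := fun k => (hv0 k).mono fun ω h => sup_eq_left.mpr h
  have hUe : ∀ k, U k =ᵐ[μ] u k := fun k => (hu0 k).mono fun ω h => sup_eq_left.mpr h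
  have hAe : ∀ k, A k =ᵐ[μ] a k := fun k => (ha0 k).mono fun ω h => sup_eq_left.mpr h
  have hBe : ∀ k, B k =ᵐ[μ] b k := fun k => (hb0 k).mono fun ω h => sup_eq_left.mpr h
  have h0V : ∀ k ω, 0 ≤ V k ω := fun k ω => le_sup_right
  have h0U : ∀ k ω, 0 ≤ U k ω := fun k ω => le_sup_right
  have h0A : ∀ k ω, 0 ≤ A k ω := fun k ω => le_sup_right
  have h0B : ∀ k ω, 0 ≤ B k ω := fun k ω => le_sup_right
  have hmV : ∀ k, Measurable[F k] (V k) := fun k => (hv k).max measurable_const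
  have hmU : ∀ k, Measurable[F k] (U k) := fun k => (hu k).max measurable_const
  have hmA : ∀ k, Measurable[F k] (A k) := fun k => (ha k).max measurable_const
  have hmB : ∀ k, Measurable[F k] (B k) := fun k => (hb k).max measurable_const
  have hVint : ∀ k, Integrable (V k) μ := fun k => (hvint k).pos_part
  -- the normalizing product
  set α : ℕ → Ω → ℝ := fun k ω => ∏ j ∈ Finset.range k, (1 + A j ω) with hαdef
  have hα1 : ∀ k ω, 1 ≤ α k ω := by
    intro k ω
    simp only [hαdef]
    calc (1:ℝ) = ∏ _j ∈ Finset.range k, 1 := by simp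
      _ ≤ ∏ j ∈ Finset.range k, (1 + A j ω) :=
          Finset.prod_le_prod (by simp) fun j _ => le_add_of_nonneg_right (h0A j ω)
  have hαpos : ∀ k ω, 0 < α k ω := fun k ω => zero_lt_one.trans_le (hα1 k ω)
  have hαsucc : ∀ k ω, α (k+1) ω = α k ω * (1 + A k ω) := by
    intro k ω
    simp only [hαdef]
    exact Finset.prod_range_succ _ k
  have hαm : ∀ n k, k ≤ n + 1 → Measurable[F n] (α k) := by
    intro n k hk
    refine Finset.measurable_prod _ fun j hj => ?_
    have hjn : j ≤ n := by
      have := Finset.mem_range.mp hj; omega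
    exact measurable_const.add ((hmA j).mono (F.mono hjn) le_rfl)
  -- normalized processes
  set v' : ℕ → Ω → ℝ := fun k ω => (α k ω)⁻¹ * V k ω with hv'def
  set u' : ℕ → Ω → ℝ := fun k ω => (α (k+1) ω)⁻¹ * U k ω with hu'def
  set b' : ℕ → Ω → ℝ := fun k ω => (α (k+1) ω)⁻¹ * B k ω with hb'def
  have hmv' : ∀ k, Measurable[F k] (v' k) := fun k =>
    ((hαm k k (by omega)).inv).mul (hmV k)
  have hmu' : ∀ k, Measurable[F k] (u' k) := fun k =>
    ((hαm k (k+1) le_rfl).inv).mul (hmU k)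
  have hmb' : ∀ k, Measurable[F k] (b' k) := fun k =>
    ((hαm k (k+1) le_rfl).inv).mul (hmB k)
  have h0v' : ∀ k ω, 0 ≤ v' k ω := fun k ω =>
    mul_nonneg (inv_nonneg.mpr (hαpos k ω).le) (h0V k ω)
  have h0u' : ∀ k ω, 0 ≤ u' k ω := fun k ω =>
    mul_nonneg (inv_nonneg.mpr (hαpos (k+1) ω).le) (h0U k ω)
  have h0b' : ∀ k ω, 0 ≤ b' k ω := fun k ω =>
    mul_nonneg (inv_nonneg.mpr (hαpos (k+1) ω).le) (h0B k ω)
  have hintv' : ∀ k, Integrable (v' k) μ := by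
    intro k
    refine Integrable.mono' (hVint k)
      ((hmv' k).mono (F.le k) le_rfl).aestronglyMeasurable (ae_of_all _ fun ω => ?_)
    rw [Real.norm_eq_abs, abs_of_nonneg (h0v' k ω)]
    exact mul_le_of_le_one_left (h0V k ω) (inv_le_one_of_one_le₀ (hα1 k ω))
  -- the normalized recursion
  have hrecV : ∀ k, μ[V (k+1)|F k] ≤ᵐ[μ]
      fun ω => (1 + A k ω) * V k ω - U k ω + B k ω := by
    intro k
    filter_upwards [condExp_congr_ae (m := F k) (hVe (k+1)), hrec k, hVe k, hUe k,
      hAe k, hBe k] with ω h1 h2 h3 h4 h5 h6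
    rw [h1, h3, h4, h5, h6]
    exact h2
  have hrec' : ∀ k, μ[v' (k+1)|F k] ≤ᵐ[μ] fun ω => v' k ω - u' k ω + b' k ω := by
    intro k
    have hpull : μ[v' (k+1)|F k] =ᵐ[μ]
        fun ω => (α (k+1) ω)⁻¹ * (μ[V (k+1)|F k]) ω := by
      have h := condExp_mul_of_stronglyMeasurable_left (m := F k) (μ := μ)
        (f := fun ω => (α (k+1) ω)⁻¹) (g := V (k+1))
        ((hαm k (k+1) le_rfl).inv).stronglyMeasurable (hintv' (k+1)) (hVint (k+1))
      exact h
    filter_upwards [hpull, hrecV k] with ω h1 h2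
    rw [h1]
    have hkey : (α (k+1) ω)⁻¹ * ((1 + A k ω) * V k ω - U k ω + B k ω) =
        v' k ω - u' k ω + b' k ω := by
      have h1' : (1 + A k ω) ≠ 0 := by have := h0A k ω; intro hc; linarith
      have h2' : α k ω ≠ 0 := ne_of_gt (hαpos k ω)
      simp only [hv'def, hu'def, hb'def]
      rw [hαsucc k ω]
      field_simp
    calc (α (k+1) ω)⁻¹ * (μ[V (k+1)|F k]) ω
        ≤ (α (k+1) ω)⁻¹ * ((1 + A k ω) * V k ω - U k ω + B k ω) :=
          mul_le_mul_of_nonneg_left h2 (inv_nonneg.mpr (hαpos (k+1) ω).le)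
      _ = v' k ω - u' k ω + b' k ω := hkey
  -- apply the stopped convergence lemma
  have haux : ∀ M : ℕ, ∀ᵐ ω ∂μ, (∀ n, ∑ j ∈ Finset.range n, b' j ω ≤ M) →
      ((Summable fun k => u' k ω) ∧ ∃ c, Tendsto (fun k => v' k ω) atTop (nhds c)) :=
    fun M => RS.aux F v' u' b' hmv' hmu' hmb' h0v' h0u' h0b' hintv' hrec' M
  filter_upwards [ae_all_iff.2 haux, ae_all_iff.2 hVe, ae_all_iff.2 hUe,
    ae_all_iff.2 hAe, ae_all_iff.2 hBe, hasum, hbsum]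
    with ω hMI hVω hUω hAω hBω hsa hsb
  have hsA : Summable fun k => A k ω := hsa.congr fun k => (hAω k).symm
  have hsb' : Summable fun k => b' k ω := by
    refine Summable.of_nonneg_of_le (fun k => h0b' k ω) (fun k => ?_)
      (hsb.congr fun k => (hBω k).symm)
    simp only [hb'def]
    exact mul_le_of_le_one_left (h0B k ω) (inv_le_one_of_one_le₀ (hα1 (k+1) ω))
  set M : ℕ := ⌈∑' j, b' j ω⌉₊ with hMdef
  have hsum_le : ∀ n, ∑ j ∈ Finset.range n, b' j ω ≤ (M : ℝ) := fun n =>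
    le_trans (Summable.sum_le_tsum _ (fun i _ => h0b' i ω) hsb') (Nat.le_ceil _)
  obtain ⟨husum', c', hc'⟩ := hMI M hsum_le
  -- convergence of the product
  set E : ℝ := Real.exp (∑' j, A j ω) with hEdef
  have hαle : ∀ k, α k ω ≤ E := by
    intro k
    calc α k ω ≤ ∏ j ∈ Finset.range k, Real.exp (A j ω) :=
          Finset.prod_le_prod (fun j _ => by linarith [h0A j ω])
            (fun j _ => by linarith [Real.add_one_le_exp (A j ω)])
      _ = Real.exp (∑ j ∈ Finset.range k, A j ω) := (Real.exp_sum _ _).symm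
      _ ≤ E := Real.exp_le_exp.mpr (Summable.sum_le_tsum _ (fun i _ => h0A i ω) hsA)
  have hαmono : Monotone fun k => α k ω := by
    refine monotone_nat_of_le_succ fun k => ?_
    rw [hαsucc k ω]
    exact le_mul_of_one_le_right (hαpos k ω).le (by linarith [h0A k ω])
  have hαbdd : BddAbove (Set.range fun k => α k ω) := by
    refine ⟨E, ?_⟩
    rintro x ⟨k, rfl⟩
    exact hαle k
  have hαtend : Tendsto (fun k => α k ω) atTop (nhds (⨆ k, α k ω)) :=
    tendsto_atTop_ciSup hαmono hαbdd
  set L : ℝ := ⨆ k, α k ω with hLdef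
  -- convergence of v
  have hveq : ∀ k, v k ω = α k ω * v' k ω := by
    intro k
    simp only [hv'def]
    rw [hVω k, ← mul_assoc, mul_inv_cancel₀ (ne_of_gt (hαpos k ω)), one_mul]
  have hvt : Tendsto (fun k => v k ω) atTop (nhds (L * c')) :=
    Tendsto.congr (fun k => (hveq k).symm) (hαtend.mul hc')
  have hc0 : 0 ≤ L * c' := by
    refine le_of_tendsto_of_tendsto' tendsto_const_nhds hvt fun k => ?_
    rw [← hVω k]
    exact h0V k ω
  -- summability of u
  have huleq : ∀ k, u k ω ≤ E * u' k ω := by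
    intro k
    have h1 : u k ω = α (k+1) ω * u' k ω := by
      simp only [hu'def]
      rw [← mul_assoc, mul_inv_cancel₀ (ne_of_gt (hαpos (k+1) ω)), one_mul, hUω k]
    rw [h1]
    exact mul_le_mul_of_nonneg_right (hαle (k+1)) (h0u' k ω)
  have husum : Summable fun k => u k ω :=
    Summable.of_nonneg_of_le (fun k => by rw [← hUω k]; exact h0U k ω)
      huleq (husum'.mul_left E)
  exact ⟨husum, L * c', hc0, hvt⟩
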